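/- Let N ≥ 1, let Ω be the open ball of radius R > 0 centered at the origin in ℝ^N, let γ > 1, and let ρ : Ω → [0, ∞) be measurable with ρ = 0 almost everywhere on the ball B_r̄ of radius r̄ ∈ [0, R]. Suppose ∫_Ω ρ dx = M₀ > 0 and (1/(γ−1))∫_Ω ρ^γ dx ≤ E₀ with E₀ > 0. Then r̄^N ≤ R^N − M₀^{γ/(γ−1)} / ( ω_N · ((γ−1)E₀)^{1/(γ−1)} ), where ω_N is the Lebesgue measure of the unit ball in ℝ^N. -/

import Mathlib

open MeasureTheory Metric

theorem vacuum_radius_bound (N : ℕ) (hN : 1 ≤ N) (R rbar : ℝ) (hR : 0 < R)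
    (hrbar : 0 ≤ rbar) (hrR : rbar ≤ R) (γ : ℝ) (hγ : 1 < γ)
    (ρ : EuclideanSpace ℝ (Fin N) → ℝ) (hmeas : Measurable ρ) (hnn : ∀ x, 0 ≤ ρ x)
    (hvac : ∀ᵐ x ∂(volume.restrict (ball (0 : EuclideanSpace ℝ (Fin N)) rbar)), ρ x = 0)
    (M₀ E₀ : ℝ) (hM : 0 < M₀) (hE : 0 < E₀)
    (hmass : ∫⁻ x in ball (0 : EuclideanSpace ℝ (Fin N)) R, ENNReal.ofReal (ρ x)
        = ENNReal.ofReal M₀)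
    (henergy : ∫⁻ x in ball (0 : EuclideanSpace ℝ (Fin N)) R, ENNReal.ofReal ((ρ x) ^ γ)
        ≤ ENNReal.ofReal ((γ - 1) * E₀)) :
    rbar ^ N ≤ R ^ N -
      M₀ ^ (γ / (γ - 1)) /
        ((volume (ball (0 : EuclideanSpace ℝ (Fin N)) 1)).toReal
          * ((γ - 1) * E₀) ^ (1 / (γ - 1))) := by
  haveI : Nontrivial (EuclideanSpace ℝ (Fin N)) :=
    Module.nontrivial_of_finrank_pos (R := ℝ) (by simp; omega)
  have hdim : Module.finrank ℝ (EuclideanSpace ℝ (Fin N)) = N := by simp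
  set B1 := ball (0 : EuclideanSpace ℝ (Fin N)) 1 with hB1
  set s := ball (0 : EuclideanSpace ℝ (Fin N)) R \ ball (0 : EuclideanSpace ℝ (Fin N)) rbar
    with hs_def
  have hγ0 : (0:ℝ) < γ := by linarith
  have hγ1 : (0:ℝ) < γ - 1 := by linarith
  have hωpos : 0 < (volume B1).toReal :=
    ENNReal.toReal_pos (measure_ball_pos volume 0 one_pos).ne' measure_ball_lt_top.ne
  set ω := (volume B1).toReal with hω
  have hc : (0:ℝ) < (γ - 1) * E₀ := by positivity
  -- mass concentrated on the annulus
  have hzero : ∫⁻ x in ball (0 : EuclideanSpace ℝ (Fin N)) rbar, ENNReal.ofReal (ρ x) = 0 := by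
    have h0 : (fun x => ENNReal.ofReal (ρ x))
        =ᵐ[volume.restrict (ball (0 : EuclideanSpace ℝ (Fin N)) rbar)] 0 :=
      hvac.mono fun x hx => by simp [hx]
    rw [lintegral_congr_ae h0]; simp
  have hunion : ball (0 : EuclideanSpace ℝ (Fin N)) rbar ∪ s
      = ball (0 : EuclideanSpace ℝ (Fin N)) R :=
    Set.union_diff_cancel (ball_subset_ball hrR)
  have hmass' : ∫⁻ x in s, ENNReal.ofReal (ρ x) = ENNReal.ofReal M₀ := by
    rw [← hmass, ← hunion, lintegral_union (measurableSet_ball.diff measurableSet_ball)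
      disjoint_sdiff_self_right, hzero, zero_add]
  -- Hölder
  have hconj : γ.HolderConjugate (γ / (γ - 1)) := .conjExponent hγ
  have hholder := ENNReal.lintegral_mul_le_Lp_mul_Lq (volume.restrict s) hconj
    (f := fun x => ENNReal.ofReal (ρ x)) (g := 1)
    (hmeas.ennreal_ofReal.aemeasurable) aemeasurable_const
  simp only [Pi.mul_apply, Pi.one_apply, mul_one, ENNReal.one_rpow, lintegral_one,
    Measure.restrict_apply MeasurableSet.univ, Set.univ_inter] at hholder
  rw [hmass'] at hholder
  -- energy bound on the annulus
  have henergy' : ∫⁻ x in s, ENNReal.ofReal (ρ x) ^ γ ≤ ENNReal.ofReal ((γ - 1) * E₀) := by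
    calc ∫⁻ x in s, ENNReal.ofReal (ρ x) ^ γ
        = ∫⁻ x in s, ENNReal.ofReal ((ρ x) ^ γ) := by
          refine lintegral_congr fun x => ?_
          rw [ENNReal.ofReal_rpow_of_nonneg (hnn x) hγ0.le]
      _ ≤ ∫⁻ x in ball (0 : EuclideanSpace ℝ (Fin N)) R, ENNReal.ofReal ((ρ x) ^ γ) :=
          lintegral_mono_set Set.diff_subset
      _ ≤ ENNReal.ofReal ((γ - 1) * E₀) := henergy
  -- measure of the annulus
  have hvols : volume s = ENNReal.ofReal ((R ^ N - rbar ^ N) * ω) := by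
    rw [hs_def, measure_diff (ball_subset_ball hrR) measurableSet_ball.nullMeasurableSet
      measure_ball_lt_top.ne, Measure.addHaar_ball _ _ hrbar, Measure.addHaar_ball _ _ hR.le,
      hdim, ← ENNReal.sub_mul (fun _ _ => measure_ball_lt_top.ne),
      ← ENNReal.ofReal_sub _ (pow_nonneg hrbar N), ← hB1, hω,
      ENNReal.ofReal_mul (by nlinarith [pow_le_pow_left₀ hrbar hrR N]),
      ENNReal.ofReal_toReal measure_ball_lt_top.ne]
  -- convert Hölder bound to reals
  have hVnn : 0 ≤ (R ^ N - rbar ^ N) * ω := by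
    have := pow_le_pow_left₀ hrbar hrR N
    nlinarith
  have hreal : M₀ ≤ ((γ - 1) * E₀) ^ (1 / γ) * ((R ^ N - rbar ^ N) * ω) ^ (1 / (γ / (γ - 1))) := by
    have hrhs : (∫⁻ x in s, ENNReal.ofReal (ρ x) ^ γ) ^ (1 / γ) * volume s ^ (1 / (γ / (γ - 1)))
        ≤ ENNReal.ofReal (((γ - 1) * E₀) ^ (1 / γ) * ((R ^ N - rbar ^ N) * ω) ^ (1 / (γ / (γ - 1)))) := by
      rw [ENNReal.ofReal_mul (by positivity), ← ENNReal.ofReal_rpow_of_nonneg hc.le (by positivity),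
        ← ENNReal.ofReal_rpow_of_nonneg hVnn (by positivity), ← hvols]
      exact mul_le_mul' (ENNReal.rpow_le_rpow henergy' (by positivity)) le_rfl
    have := hholder.trans hrhs
    rwa [ENNReal.ofReal_le_ofReal_iff (by positivity)] at this
  -- final algebra
  have hq : 1 / (γ / (γ - 1)) = (γ - 1) / γ := by
    rw [one_div_div]
  rw [hq] at hreal
  have hpow : M₀ ^ (γ / (γ - 1)) ≤ ((γ - 1) * E₀) ^ (1 / (γ - 1)) * ((R ^ N - rbar ^ N) * ω) := by
    have h1 : M₀ ^ (γ / (γ - 1)) ≤ (((γ - 1) * E₀) ^ (1 / γ) * ((R ^ N - rbar ^ N) * ω) ^ ((γ - 1) / γ)) ^ (γ / (γ - 1)) :=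
      Real.rpow_le_rpow hM.le hreal (by positivity)
    calc M₀ ^ (γ / (γ - 1)) ≤ _ := h1
      _ = ((γ - 1) * E₀) ^ (1 / (γ - 1)) * ((R ^ N - rbar ^ N) * ω) := by
        rw [Real.mul_rpow (by positivity) (by positivity), ← Real.rpow_mul hc.le,
          ← Real.rpow_mul hVnn,
          show 1 / γ * (γ / (γ - 1)) = 1 / (γ - 1) by field_simp,
          show (γ - 1) / γ * (γ / (γ - 1)) = 1 by field_simp, Real.rpow_one]
  have hcpos : (0:ℝ) < ((γ - 1) * E₀) ^ (1 / (γ - 1)) := by positivity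
  have hfinal : M₀ ^ (γ / (γ - 1)) / (ω * ((γ - 1) * E₀) ^ (1 / (γ - 1))) ≤ R ^ N - rbar ^ N := by
    rw [div_le_iff₀ (by positivity)]
    nlinarith [hpow]
  linarith
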